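/- Let A ∈ ℤ^{m×n} and let z ∈ ℤ^n be a cycle of A, i.e. Az = 0. Then z can be written as z = Σ_{i=1}^{2n} λ_i g_i, where each λ_i is a nonnegative integer and each g_i is either the zero vector or an element of the Graver basis of A that is sign-compatible with z. -/

import Mathlib

/-- Two integer vectors are sign-compatible if they agree in sign componentwise. -/
def SignCompat {ι : Type*} (u v : ι → ℤ) : Prop := ∀ i, 0 ≤ u i * v i

/-- A cycle of an integer matrix `A` is an integer vector in its kernel. -/
def IsCycle {R C : Type*} [Fintype C] (A : Matrix R C ℤ) (y : C → ℤ) : Prop :=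
  A.mulVec y = 0

/-- The Graver basis of `A` consists of the nonzero cycles of `A` that cannot be
written as the sum of two sign-compatible nonzero cycles of `A`. -/
def InGraverBasis {R C : Type*} [Fintype C] (A : Matrix R C ℤ) (y : C → ℤ) : Prop :=
  IsCycle A y ∧ y ≠ 0 ∧
    ¬ ∃ u v : C → ℤ, IsCycle A u ∧ IsCycle A v ∧ u ≠ 0 ∧ v ≠ 0 ∧
      SignCompat u v ∧ y = u + v

namespace GraverAux
-- PART1 (sans defs header)

variable {m n : ℕ}

def Conf1 (a b : ℤ) : Prop := (0 ≤ a ∧ 0 ≤ b ∧ b ≤ a) ∨ (a ≤ 0 ∧ b ≤ 0 ∧ a ≤ b)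

def Conf (z g : Fin n → ℤ) : Prop := ∀ j, Conf1 (z j) (g j)

def norm1 (z : Fin n → ℤ) : ℕ := ∑ j, (z j).natAbs

lemma conf_refl (z : Fin n → ℤ) : Conf z z := fun j => by unfold Conf1; omega

lemma conf_trans {z r g : Fin n → ℤ} (h1 : Conf z r) (h2 : Conf r g) : Conf z g := by
  intro j; have a := h1 j; have b := h2 j; unfold Conf1 at *; omega

lemma signCompat_of_conf {z g : Fin n → ℤ} (h : Conf z g) : SignCompat g z := by
  intro j
  rcases h j with ⟨ha, hb, _⟩ | ⟨ha, hb, _⟩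
  · exact mul_nonneg hb ha
  · exact mul_nonneg_iff.mpr (Or.inr ⟨hb, ha⟩)

lemma signCompat_comm {u v : Fin n → ℤ} (h : SignCompat u v) : SignCompat v u :=
  fun j => by rw [mul_comm]; exact h j

lemma conf_left {u v : Fin n → ℤ} (h : SignCompat u v) : Conf (u + v) u := by
  intro j
  have h2 := mul_nonneg_iff.mp (h j)
  simp only [Pi.add_apply]
  unfold Conf1
  omega

lemma norm1_add {u v : Fin n → ℤ} (h : SignCompat u v) :
    norm1 (u + v) = norm1 u + norm1 v := by
  unfold norm1
  rw [← Finset.sum_add_distrib]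
  refine Finset.sum_congr rfl fun j _ => ?_
  have h2 := mul_nonneg_iff.mp (h j)
  simp only [Pi.add_apply]
  omega

lemma norm1_pos {z : Fin n → ℤ} (h : z ≠ 0) : 1 ≤ norm1 z := by
  by_contra hc
  push_neg at hc
  apply h
  funext j
  have h0 : norm1 z = 0 := by omega
  have := (Finset.sum_eq_zero_iff).mp h0 j (Finset.mem_univ j)
  simpa using Int.natAbs_eq_zero.mp this

def sgn (z : Fin n → ℤ) (j : Fin n) : ℤ := if 0 ≤ z j then 1 else -1

def wt (z : Fin n → ℤ) : (Fin n → ℤ) →+ ℤ where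
  toFun x := ∑ j, sgn z j * x j
  map_zero' := by simp
  map_add' x y := by simp [mul_add, Finset.sum_add_distrib]

lemma wt_apply (z x : Fin n → ℤ) : wt z x = ∑ j, sgn z j * x j := rfl

lemma wt_conf {z g : Fin n → ℤ} (h : Conf z g) : wt z g = (norm1 g : ℤ) := by
  rw [wt_apply]
  unfold norm1
  rw [Nat.cast_sum]
  refine Finset.sum_congr rfl fun j _ => ?_
  have hj := h j
  unfold Conf1 at hj
  unfold sgn
  split_ifs with h' <;> omega

lemma length_le_sum_int : ∀ (l : List ℤ), (∀ x ∈ l, 1 ≤ x) → (l.length : ℤ) ≤ l.sum := by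
  intro l
  induction l with
  | nil => simp
  | cons a t ih =>
    intro h
    simp only [List.length_cons, List.sum_cons]
    push_cast
    have h1 := ih (fun x hx => h x (List.mem_cons_of_mem _ hx))
    have h2 := h a (List.mem_cons_self)
    linarith

lemma length_le_norm1 {z : Fin n → ℤ} {L : List (Fin n → ℤ)} (hsum : L.sum = z)
    (h : ∀ g ∈ L, g ≠ 0 ∧ Conf z g) : L.length ≤ norm1 z := by
  have key : (norm1 z : ℤ) = (L.map (wt z)).sum := by
    rw [← wt_conf (conf_refl z), ← hsum, map_list_sum]
  have hlen : (L.length : ℤ) ≤ (L.map (wt z)).sum := by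
    have := length_le_sum_int (L.map (wt z)) (by
      intro x hx
      obtain ⟨g, hg, rfl⟩ := List.mem_map.mp hx
      rw [wt_conf (h g hg).2]
      exact_mod_cast norm1_pos (h g hg).1)
    simpa using this
  omega

theorem exists_conf_list (A : Matrix (Fin m) (Fin n) ℤ) :
    ∀ (N : ℕ) (z : Fin n → ℤ), norm1 z < N → IsCycle A z →
    ∃ L : List (Fin n → ℤ), L.sum = z ∧ ∀ g ∈ L, InGraverBasis A g ∧ Conf z g := by
  intro N
  induction N with
  | zero => exact fun z h _ => absurd h (Nat.not_lt_zero _)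
  | succ N ih =>
    intro z hlt hz
    by_cases h0 : z = 0
    · exact ⟨[], by simp [h0], by simp⟩
    by_cases hG : InGraverBasis A z
    · exact ⟨[z], by simp, by simp [hG, conf_refl]⟩
    · have hex : ∃ u v : (Fin n → ℤ), IsCycle A u ∧ IsCycle A v ∧ u ≠ 0 ∧ v ≠ 0 ∧
          SignCompat u v ∧ z = u + v := by
        by_contra hn
        exact hG ⟨hz, h0, hn⟩
      obtain ⟨u, v, hu, hv, hu0, hv0, hsc, hzuv⟩ := hex
      have hnadd : norm1 z = norm1 u + norm1 v := by rw [hzuv]; exact norm1_add hsc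
      have hpu := norm1_pos hu0
      have hpv := norm1_pos hv0
      obtain ⟨Lu, hLu, hLu2⟩ := ih u (by omega) hu
      obtain ⟨Lv, hLv, hLv2⟩ := ih v (by omega) hv
      have hczu : Conf z u := by rw [hzuv]; exact conf_left hsc
      have hczv : Conf z v := by
        rw [hzuv, add_comm]; exact conf_left (signCompat_comm hsc)
      refine ⟨Lu ++ Lv, by simp [hLu, hLv, hzuv], ?_⟩
      intro g hg
      rcases List.mem_append.mp hg with h | h
      · exact ⟨(hLu2 g h).1, conf_trans hczu (hLu2 g h).2⟩
      · exact ⟨(hLv2 g h).1, conf_trans hczv (hLv2 g h).2⟩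


-- PART2 extras

def cqh : (Fin n → ℤ) →+ (Fin n → ℚ) where
  toFun v j := (v j : ℚ)
  map_zero' := by funext j; simp
  map_add' u v := by funext j; simp [Pi.add_apply]

@[simp] lemma cqh_apply (v : Fin n → ℤ) (j : Fin n) : cqh v j = (v j : ℚ) := rfl

def wq (z : Fin n → ℤ) : (Fin n → ℚ) →ₗ[ℚ] ℚ where
  toFun x := ∑ j, (sgn z j : ℚ) * x j
  map_add' x y := by simp [mul_add, Finset.sum_add_distrib]
  map_smul' c x := by
    simp only [Pi.smul_apply, smul_eq_mul, RingHom.id_apply, Finset.mul_sum]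
    exact Finset.sum_congr rfl fun j _ => by ring

lemma wq_apply (z : Fin n → ℤ) (x : Fin n → ℚ) : wq z x = ∑ j, (sgn z j : ℚ) * x j := rfl

lemma wq_cqh_conf {z g : Fin n → ℤ} (h : Conf z g) : wq z (cqh g) = (norm1 g : ℚ) := by
  rw [wq_apply]
  unfold norm1
  rw [Nat.cast_sum]
  refine Finset.sum_congr rfl fun j _ => ?_
  have hj := h j
  unfold Conf1 at hj
  simp only [cqh_apply]
  unfold sgn
  split_ifs with h'
  · have h1 : ((g j).natAbs : ℚ) = ((|g j| : ℤ) : ℚ) := Nat.cast_natAbs _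
    rw [h1, abs_of_nonneg (show (0:ℤ) ≤ g j by omega)]
    simp
  · have h1 : ((g j).natAbs : ℚ) = ((|g j| : ℤ) : ℚ) := Nat.cast_natAbs _
    rw [h1, abs_of_nonpos (show g j ≤ (0:ℤ) by omega)]
    simp

theorem reduce_support (z : Fin n → ℤ) :
    ∀ (k : ℕ) (T : Finset (Fin n → ℤ)) (lam : (Fin n → ℤ) → ℚ),
      T.card ≤ k →
      (∀ g ∈ T, Conf z g ∧ g ≠ 0) →
      (∀ g, 0 ≤ lam g) →
      (∑ g ∈ T, lam g • cqh g = cqh z) →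
      ∃ (T' : Finset (Fin n → ℤ)) (lam' : (Fin n → ℤ) → ℚ),
        T' ⊆ T ∧ T'.card ≤ n ∧ (∀ g, 0 ≤ lam' g) ∧
        (∑ g ∈ T', lam' g • cqh g = cqh z) ∧
        (∑ g ∈ T, lam g) ≤ (∑ g ∈ T', lam' g) := by
  intro k
  induction k with
  | zero =>
    intro T lam hcard hT hnn hfeas
    have hTe : T = ∅ := Finset.card_eq_zero.mp (Nat.le_zero.mp hcard)
    subst hTe
    exact ⟨∅, lam, Finset.Subset.refl _, by simp, hnn, hfeas, le_refl _⟩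
  | succ k ih =>
    intro T lam hcard hT hnn hfeas
    classical
    by_cases hli : LinearIndependent ℚ (fun g : {x // x ∈ T} => cqh (g : Fin n → ℤ))
    · refine ⟨T, lam, Finset.Subset.refl _, ?_, hnn, hfeas, le_refl _⟩
      have := hli.fintype_card_le_finrank
      simpa [Module.finrank_pi, Fintype.card_coe] using this
    · obtain ⟨c, hc0, i0, hci0⟩ := Fintype.not_linearIndependent_iff.mp hli
      set ch : (Fin n → ℤ) → ℚ := fun g => if h : g ∈ T then c ⟨g, h⟩ else 0 with hch
      have hchT : ∀ g ∉ T, ch g = 0 := by intro g hg; simp [hch, hg]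
      have hchsum : ∑ g ∈ T, ch g • cqh g = 0 := by
        rw [← Finset.sum_attach T (fun g => ch g • cqh g), ← hc0, Finset.univ_eq_attach]
        exact Finset.sum_congr rfl fun i _ => by simp [hch, i.2]
      -- choose direction
      have key : ∀ d : (Fin n → ℤ) → ℚ,
          (∀ g ∉ T, d g = 0) → (∑ g ∈ T, d g • cqh g = 0) →
          (0 ≤ ∑ g ∈ T, d g) → (∃ g ∈ T, d g ≠ 0) →
          ∃ (T' : Finset (Fin n → ℤ)) (lam' : (Fin n → ℤ) → ℚ),
            T' ⊆ T ∧ T'.card ≤ n ∧ (∀ g, 0 ≤ lam' g) ∧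
            (∑ g ∈ T', lam' g • cqh g = cqh z) ∧
            (∑ g ∈ T, lam g) ≤ (∑ g ∈ T', lam' g) := by
        intro d hdT hdsum hdnn hdne
        -- balancedness
        have hbal : ∑ g ∈ T, d g * (norm1 g : ℚ) = 0 := by
          have h1 := congrArg (wq z) hdsum
          rw [map_sum, map_zero] at h1
          rw [← h1]
          refine Finset.sum_congr rfl fun g hg => ?_
          rw [map_smul, smul_eq_mul, wq_cqh_conf (hT g hg).1]
        -- existence of a negative coefficient
        have hneg : ∃ g ∈ T, d g < 0 := by
          by_contra hno
          push_neg at hno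
          have hz0 : ∀ g ∈ T, d g * (norm1 g : ℚ) = 0 := by
            rw [← Finset.sum_eq_zero_iff_of_nonneg
              (fun g hg => mul_nonneg (hno g hg) (by positivity))]
            exact hbal
          obtain ⟨g0, hg0T, hg0⟩ := hdne
          apply hg0
          have hn1 : (1:ℚ) ≤ (norm1 g0 : ℚ) := by
            exact_mod_cast norm1_pos (hT g0 hg0T).2
          have := hz0 g0 hg0T
          rcases mul_eq_zero.mp this with h | h
          · exact h
          · linarith
        obtain ⟨gneg, hgnegT, hgneg⟩ := hneg
        set F : Finset (Fin n → ℤ) := T.filter (fun g => d g < 0) with hF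
        have hFne : F.Nonempty := ⟨gneg, Finset.mem_filter.mpr ⟨hgnegT, hgneg⟩⟩
        set t : ℚ := F.inf' hFne (fun g => lam g / (-d g)) with ht
        have htnn : 0 ≤ t := by
          apply Finset.le_inf'
          intro g hg
          have hdg : d g < 0 := (Finset.mem_filter.mp hg).2
          exact div_nonneg (hnn g) (by linarith)
        obtain ⟨g0, hg0F, hg0eq⟩ := Finset.exists_mem_eq_inf' hFne (fun g => lam g / (-d g))
        have hg0T : g0 ∈ T := (Finset.mem_filter.mp hg0F).1
        have hdg0 : d g0 < 0 := (Finset.mem_filter.mp hg0F).2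
        set lam2 : (Fin n → ℤ) → ℚ := fun g => lam g + t * d g with hlam2
        have hlam2nn : ∀ g, 0 ≤ lam2 g := by
          intro g
          rcases le_or_gt 0 (d g) with h | h
          · have : 0 ≤ t * d g := mul_nonneg htnn h
            simp only [hlam2]; linarith [hnn g]
          · have hgT : g ∈ T := by
              by_contra hgT
              rw [hdT g hgT] at h; exact absurd h (lt_irrefl 0)
            have hgF : g ∈ F := Finset.mem_filter.mpr ⟨hgT, h⟩
            have h1 : t ≤ lam g / (-d g) := by rw [ht]; exact Finset.inf'_le _ hgF
            have h2 : t * (-d g) ≤ lam g := by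
              rw [le_div_iff₀ (by linarith)] at h1; linarith
            simp only [hlam2]; linarith
        have hdg0' : d g0 ≠ 0 := ne_of_lt hdg0
        have hlam2g0 : lam2 g0 = 0 := by
          show lam g0 + t * d g0 = 0
          rw [ht, hg0eq, div_mul_eq_mul_div, div_neg, mul_div_assoc, div_self hdg0', mul_one]
          ring
        have hlam2sum : ∑ g ∈ T, lam2 g • cqh g = cqh z := by
          simp only [hlam2, add_smul]
          rw [Finset.sum_add_distrib, hfeas]
          have : ∑ g ∈ T, (t * d g) • cqh g = t • ∑ g ∈ T, d g • cqh g := by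
            rw [Finset.smul_sum]
            exact Finset.sum_congr rfl fun g _ => by rw [smul_smul]
          rw [this, hdsum, smul_zero, add_zero]
        have hlam2obj : ∑ g ∈ T, lam g ≤ ∑ g ∈ T, lam2 g := by
          simp only [hlam2]
          rw [Finset.sum_add_distrib]
          have : 0 ≤ ∑ g ∈ T, t * d g := by
            rw [← Finset.mul_sum]
            exact mul_nonneg htnn hdnn
          linarith
        -- pass to T.erase g0
        have herase_sum : ∑ g ∈ T.erase g0, lam2 g • cqh g = cqh z := by
          rw [← hlam2sum]
          rw [← Finset.add_sum_erase T _ hg0T]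
          rw [hlam2g0, zero_smul, zero_add]
        have herase_obj : ∑ g ∈ T, lam g ≤ ∑ g ∈ T.erase g0, lam2 g := by
          have : ∑ g ∈ T, lam2 g = lam2 g0 + ∑ g ∈ T.erase g0, lam2 g :=
            (Finset.add_sum_erase T _ hg0T).symm
          rw [hlam2g0, zero_add] at this
          rw [← this]; exact hlam2obj
        have hcard' : (T.erase g0).card ≤ k := by
          have := Finset.card_erase_of_mem hg0T
          omega
        obtain ⟨T', lam', h1, h2, h3, h4, h5⟩ := ih (T.erase g0) lam2 hcard'
          (fun g hg => hT g (Finset.mem_of_mem_erase hg)) hlam2nn herase_sum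
        exact ⟨T', lam', h1.trans (Finset.erase_subset _ _), h2, h3, h4, herase_obj.trans h5⟩
      -- apply key with the right sign
      rcases le_or_gt 0 (∑ g ∈ T, ch g) with hs | hs
      · exact key ch hchT hchsum hs ⟨i0, i0.2, by simpa [hch, i0.2] using hci0⟩
      · refine key (fun g => -ch g) (fun g hg => by show -ch g = 0; rw [hchT g hg, neg_zero]) ?_ ?_ ?_
        · have h1 : ∑ g ∈ T, -ch g • cqh g = ∑ g ∈ T, -(ch g • cqh g) :=
            Finset.sum_congr rfl fun g _ => neg_smul _ _
          rw [h1, Finset.sum_neg_distrib, hchsum, neg_zero]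
        · rw [Finset.sum_neg_distrib]; linarith
        · refine ⟨i0, i0.2, ?_⟩
          show -ch ↑i0 ≠ 0
          simp only [ne_eq, neg_eq_zero]
          simpa [hch, i0.2] using hci0

-- PART3
lemma count_sum_eq (T : Finset (Fin n → ℤ)) :
    ∀ (L : List (Fin n → ℤ)), (∀ g ∈ L, g ∈ T) →
      (∑ g ∈ T, (L.count g : ℚ) • cqh g = cqh L.sum) ∧
      ((∑ g ∈ T, (L.count g : ℚ)) = (L.length : ℚ)) := by
  classical
  intro L
  induction L with
  | nil => intro _; constructor <;> simp
  | cons a t ih =>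
    intro hmem
    obtain ⟨ih1, ih2⟩ := ih (fun g hg => hmem g (List.mem_cons_of_mem a hg))
    have ha : a ∈ T := hmem a (List.mem_cons_self)
    have hcount : ∀ g : Fin n → ℤ, (((a :: t).count g : ℚ)) = (t.count g : ℚ) + if a = g then 1 else 0 := by
      intro g
      by_cases h : a = g
      · subst h; simp [List.count_cons]
      · have h1 : ¬((a == g) = true) := by
          simp only [beq_iff_eq]
          exact h
        rw [List.count_cons, if_neg h1, add_zero, if_neg h, add_zero]
    constructor
    · rw [List.sum_cons, map_add]
      calc ∑ g ∈ T, ((a :: t).count g : ℚ) • cqh g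
          = ∑ g ∈ T, ((t.count g : ℚ) • cqh g + (if a = g then (1:ℚ) else 0) • cqh g) := by
            refine Finset.sum_congr rfl fun g _ => ?_
            rw [hcount g, add_smul]
        _ = (∑ g ∈ T, (t.count g : ℚ) • cqh g) + ∑ g ∈ T, (if a = g then (1:ℚ) else 0) • cqh g := Finset.sum_add_distrib
        _ = cqh t.sum + cqh a := by
            rw [ih1]
            congr 1
            have : ∀ g ∈ T, (if a = g then (1:ℚ) else 0) • cqh g = if a = g then cqh g else 0 := by
              intro g _
              split_ifs <;> simp
            rw [Finset.sum_congr rfl this, Finset.sum_ite_eq T a (fun g => cqh g), if_pos ha]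
        _ = cqh a + cqh t.sum := by ring
    · calc ∑ g ∈ T, ((a :: t).count g : ℚ)
          = ∑ g ∈ T, ((t.count g : ℚ) + if a = g then 1 else 0) := Finset.sum_congr rfl fun g _ => hcount g
        _ = (∑ g ∈ T, (t.count g : ℚ)) + ∑ g ∈ T, (if a = g then (1:ℚ) else 0) := Finset.sum_add_distrib
        _ = (t.length : ℚ) + 1 := by rw [ih2, Finset.sum_ite_eq T a (fun _ => (1:ℚ)), if_pos ha]
        _ = ((a :: t).length : ℚ) := by push_cast [List.length_cons]; ring

-- PART4
lemma exists_rep_list (T' : Finset (Fin n → ℤ)) (fl : (Fin n → ℤ) → ℕ) :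
    ∃ L : List (Fin n → ℤ), (∀ g ∈ L, g ∈ T') ∧
      L.sum = ∑ g ∈ T', (fl g : ℤ) • g ∧ (L.length : ℚ) = ∑ g ∈ T', (fl g : ℚ) := by
  classical
  induction T' using Finset.induction_on with
  | empty => exact ⟨[], by simp, by simp, by simp⟩
  | @insert a s ha ih =>
    obtain ⟨L, h1, h2, h3⟩ := ih
    refine ⟨List.replicate (fl a) a ++ L, ?_, ?_, ?_⟩
    · intro g hg
      rcases List.mem_append.mp hg with h | h
      · rw [List.eq_of_mem_replicate h]; exact Finset.mem_insert_self a s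
      · exact Finset.mem_insert_of_mem (h1 g h)
    · rw [List.sum_append, List.sum_replicate, Finset.sum_insert ha, h2, natCast_zsmul]
    · rw [List.length_append, List.length_replicate, Finset.sum_insert ha, ← h3]
      push_cast
      ring

lemma sum_range_getD {α M : Type*} [AddCommMonoid M] (h : α → M) (d : α) (hd : h d = 0) :
    ∀ (l : List α) (k : ℕ), l.length ≤ k →
      ∑ i ∈ Finset.range k, h (l.getD i d) = (l.map h).sum := by
  intro l
  induction l with
  | nil =>
    intro k _
    simp only [List.map_nil, List.sum_nil]
    refine Finset.sum_eq_zero fun i _ => ?_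
    rw [List.getD_nil, hd]
  | cons a t ih =>
    intro k hk
    cases k with
    | zero => simp at hk
    | succ k =>
      rw [Finset.sum_range_succ']
      have h1 : ∀ i, (a :: t).getD (i + 1) d = t.getD i d := fun i => rfl
      have h2 : (a :: t).getD 0 d = a := rfl
      simp only [h1, h2]
      rw [ih k (by simpa using hk)]
      rw [List.map_cons, List.sum_cons]
      exact add_comm _ _


lemma list_map_sum_toFinset {α M : Type*} [AddCommMonoid M] (s : Finset α) (f : α → M) :
    (s.toList.map f).sum = ∑ x ∈ s, f x := by
  rw [← Multiset.sum_coe, ← Multiset.map_coe, Finset.coe_toList]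
  rfl

theorem main (m n : ℕ) (A : Matrix (Fin m) (Fin n) ℤ)
    (z : Fin n → ℤ) (hz : IsCycle A z) :
    ∃ (lam : Fin (2 * n) → ℕ) (g : Fin (2 * n) → Fin n → ℤ),
      z = ∑ i, (lam i : ℤ) • g i ∧
      ∀ i, g i = 0 ∨ (InGraverBasis A (g i) ∧ SignCompat (g i) z) := by
  classical
  by_cases h0 : z = 0
  · exact ⟨fun _ => 0, fun _ => 0, by simp [h0], fun i => Or.inl rfl⟩
  -- the box Finset of conformal Graver elements
  set T : Finset (Fin n → ℤ) :=
    (Fintype.piFinset fun j => Finset.Icc (-((z j).natAbs : ℤ)) ((z j).natAbs : ℤ)).filter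
      (fun g => InGraverBasis A g ∧ Conf z g) with hTdef
  have hmemT : ∀ g, (InGraverBasis A g ∧ Conf z g) → g ∈ T := by
    intro g hg
    refine Finset.mem_filter.mpr ⟨?_, hg⟩
    rw [Fintype.mem_piFinset]
    intro j
    have hj := hg.2 j
    unfold Conf1 at hj
    rw [Finset.mem_Icc]
    omega
  have hTprops : ∀ g ∈ T, InGraverBasis A g ∧ Conf z g :=
    fun g hg => (Finset.mem_filter.mp hg).2
  -- the set of achievable lengths
  set S : Set ℕ := {k | ∃ L : List (Fin n → ℤ),
      L.sum = z ∧ (∀ g ∈ L, InGraverBasis A g ∧ Conf z g) ∧ L.length = k} with hSdef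
  have hSne : S.Nonempty := by
    obtain ⟨L, h1, h2⟩ := exists_conf_list A (norm1 z + 1) z (by omega) hz
    exact ⟨L.length, L, h1, h2, rfl⟩
  have hSbdd : BddAbove S := by
    refine ⟨norm1 z, fun k hk => ?_⟩
    obtain ⟨L, h1, h2, h3⟩ := hk
    rw [← h3]
    exact length_le_norm1 h1 (fun g hg => ⟨(h2 g hg).1.2.1, (h2 g hg).2⟩)
  set N : ℕ := sSup S with hNdef
  have hNS : N ∈ S := Nat.sSup_mem hSne hSbdd
  have hNmax : ∀ k ∈ S, k ≤ N := fun k hk => le_csSup hSbdd hk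
  obtain ⟨L0, hL0sum, hL0props, hL0len⟩ := hNS
  have hN1 : 1 ≤ N := by
    by_contra hc
    apply h0
    rw [← hL0sum, List.length_eq_zero_iff.mp (by omega : L0.length = 0)]
    rfl
  have hL0T : ∀ g ∈ L0, g ∈ T := fun g hg => hmemT g (hL0props g hg)
  obtain ⟨hfeas0, hlen0⟩ := count_sum_eq T L0 hL0T
  rw [hL0sum] at hfeas0
  -- reduce support
  obtain ⟨T', lam', hsub, hcard', hnn', hfeas', hobj⟩ :=
    reduce_support z T.card T (fun g => (L0.count g : ℚ)) le_rfl
      (fun g hg => ⟨(hTprops g hg).2, (hTprops g hg).1.2.1⟩)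
      (fun g => Nat.cast_nonneg _) hfeas0
  have hNle : (N : ℚ) ≤ ∑ g ∈ T', lam' g := by
    rw [← hL0len]
    calc (L0.length : ℚ) = ∑ g ∈ T, (L0.count g : ℚ) := hlen0.symm
      _ ≤ ∑ g ∈ T', lam' g := hobj
  -- floors
  set fl : (Fin n → ℤ) → ℕ := fun g => (Int.floor (lam' g)).toNat with hfldef
  have hfl : ∀ g, (fl g : ℚ) ≤ lam' g ∧ lam' g < fl g + 1 := by
    intro g
    have h1 : 0 ≤ ⌊lam' g⌋ := Int.floor_nonneg.mpr (hnn' g)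
    have h2 : ((fl g : ℕ) : ℚ) = ((⌊lam' g⌋ : ℤ) : ℚ) := by
      rw [hfldef]
      exact_mod_cast congrArg (fun a : ℤ => (a : ℚ)) (Int.toNat_of_nonneg h1)
    constructor
    · rw [h2]; exact Int.floor_le _
    · rw [h2]; exact Int.lt_floor_add_one _
  set y : Fin n → ℤ := ∑ g ∈ T', (fl g : ℤ) • g with hydef
  set r : Fin n → ℤ := z - y with hrdef
  have hzyr : z = y + r := by rw [hrdef]; abel
  -- r is a cycle
  have hcyc : ∀ g ∈ T', A.mulVec g = 0 := fun g hg => (hTprops g (hsub hg)).1.1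
  have hyc : A.mulVec y = 0 := by
    rw [← Matrix.mulVecLin_apply, hydef, map_sum]
    refine Finset.sum_eq_zero fun g hg => ?_
    rw [map_smul, Matrix.mulVecLin_apply, hcyc g hg, smul_zero]
  have hrc : IsCycle A r := by
    unfold IsCycle
    rw [hrdef, Matrix.mulVec_sub, hz, hyc, sub_zero]
  -- coordinatewise facts
  have hfeasj : ∀ j, (z j : ℚ) = ∑ g ∈ T', lam' g * (g j : ℚ) := by
    intro j
    have h1 := congrFun hfeas' j
    rw [Finset.sum_apply] at h1
    simp only [Pi.smul_apply, smul_eq_mul, cqh_apply] at h1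
    exact h1.symm
  have hyj : ∀ j, y j = ∑ g ∈ T', (fl g : ℤ) * g j := by
    intro j
    rw [hydef, Finset.sum_apply]
    exact Finset.sum_congr rfl fun g _ => rfl
  have hconfT' : ∀ g ∈ T', Conf z g := fun g hg => (hTprops g (hsub hg)).2
  have hconf_r : Conf z r := by
    intro j
    have hrj : r j = z j - y j := rfl
    have hrq : (r j : ℚ) = ∑ g ∈ T', (lam' g - fl g) * (g j : ℚ) := by
      rw [hrj]
      push_cast
      rw [hfeasj j, hyj j]
      push_cast
      rw [← Finset.sum_sub_distrib]
      exact Finset.sum_congr rfl fun g _ => by ring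
    rcases le_or_gt 0 (z j) with hzj | hzj
    · have hg0 : ∀ g ∈ T', 0 ≤ g j ∧ g j ≤ z j := by
        intro g hg
        have := hconfT' g hg j
        unfold Conf1 at this
        omega
      have hy0 : 0 ≤ y j := by
        rw [hyj j]
        exact Finset.sum_nonneg fun g hg =>
          mul_nonneg (by positivity) (hg0 g hg).1
      have hr0 : (0:ℚ) ≤ (r j : ℚ) := by
        rw [hrq]
        refine Finset.sum_nonneg fun g hg => mul_nonneg ?_ ?_
        · linarith [(hfl g).1]
        · exact_mod_cast (hg0 g hg).1
      have hr0' : 0 ≤ r j := by exact_mod_cast hr0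
      left
      refine ⟨hzj, hr0', ?_⟩
      rw [hrj]; omega
    · have hg0 : ∀ g ∈ T', g j ≤ 0 ∧ z j ≤ g j := by
        intro g hg
        have := hconfT' g hg j
        unfold Conf1 at this
        omega
      have hy0 : y j ≤ 0 := by
        rw [hyj j]
        exact Finset.sum_nonpos fun g hg =>
          mul_nonpos_of_nonneg_of_nonpos (by positivity) (hg0 g hg).1
      have hr0 : (r j : ℚ) ≤ 0 := by
        rw [hrq]
        refine Finset.sum_nonpos fun g hg => mul_nonpos_of_nonneg_of_nonpos ?_ ?_
        · linarith [(hfl g).1]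
        · exact_mod_cast (hg0 g hg).1
      have hr0' : r j ≤ 0 := by exact_mod_cast hr0
      right
      refine ⟨by omega, hr0', ?_⟩
      rw [hrj]; omega
  -- decompose r
  obtain ⟨Lr, hLrsum, hLrprops⟩ := exists_conf_list A (norm1 r + 1) r (by omega) hrc
  have hLrz : ∀ g ∈ Lr, InGraverBasis A g ∧ Conf z g :=
    fun g hg => ⟨(hLrprops g hg).1, conf_trans hconf_r (hLrprops g hg).2⟩
  -- combined decomposition is at most N long
  obtain ⟨Lc, hLcmem, hLcsum, hLclen⟩ := exists_rep_list T' fl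
  have hLcsum' : Lc.sum = y := by rw [hLcsum, hydef]
  have hvalid : (Lc ++ Lr).length ∈ S := by
    refine ⟨Lc ++ Lr, ?_, ?_, rfl⟩
    · rw [List.sum_append, hLcsum', hLrsum]; exact hzyr.symm
    · intro g hg
      rcases List.mem_append.mp hg with h | h
      · exact hTprops g (hsub (hLcmem g h))
      · exact hLrz g h
  have hcount : Lc.length + Lr.length ≤ N := by
    have := hNmax _ hvalid
    rw [List.length_append] at this
    exact this
  have hT'ne : T'.Nonempty := by
    rcases Finset.eq_empty_or_nonempty T' with h | h
    · exfalso
      rw [h, Finset.sum_empty] at hNle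
      have : (1:ℚ) ≤ (N:ℚ) := by exact_mod_cast hN1
      linarith
    · exact h
  have hstrict : (∑ g ∈ T', lam' g) < ∑ g ∈ T', ((fl g : ℚ) + 1) :=
    Finset.sum_lt_sum_of_nonempty hT'ne (fun g _ => (hfl g).2)
  have hLrlt : Lr.length < T'.card := by
    have h1 : ∑ g ∈ T', ((fl g : ℚ) + 1) = (∑ g ∈ T', (fl g : ℚ)) + T'.card := by
      rw [Finset.sum_add_distrib]
      simp
    have h2 : ((Lc.length + Lr.length : ℕ) : ℚ) ≤ (N : ℚ) := by exact_mod_cast hcount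
    push_cast at h2
    have h3 : (Lc.length : ℚ) = ∑ g ∈ T', (fl g : ℚ) := hLclen
    have h4 : (Lr.length : ℚ) < (T'.card : ℚ) := by linarith
    exact_mod_cast h4
  -- build the final functions
  set pairs : List (ℕ × (Fin n → ℤ)) :=
    (T'.toList.map fun g => (fl g, g)) ++ (Lr.map fun g => (1, g)) with hpairs
  have hplen : pairs.length ≤ 2 * n := by
    have h1 : pairs.length = T'.card + Lr.length := by
      rw [hpairs, List.length_append, List.length_map, List.length_map,
        Finset.length_toList]
    omega
  refine ⟨fun i => (pairs.getD i (0, 0)).1, fun i => (pairs.getD i (0, 0)).2, ?_, ?_⟩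
  · -- the sum
    have hsum : ∑ i : Fin (2 * n),
        ((pairs.getD (i : ℕ) (0, 0)).1 : ℤ) • (pairs.getD (i : ℕ) (0, 0)).2
        = (pairs.map fun p => ((p.1 : ℤ) • p.2)).sum := by
      rw [Fin.sum_univ_eq_sum_range
        (fun i => ((pairs.getD i (0, 0)).1 : ℤ) • (pairs.getD i (0, 0)).2) (2 * n)]
      exact sum_range_getD (fun p : ℕ × (Fin n → ℤ) => ((p.1 : ℤ) • p.2)) (0, 0)
        (by simp) pairs (2 * n) hplen
    rw [hsum, hpairs, List.map_append, List.sum_append, List.map_map, List.map_map]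
    have hA : ((T'.toList.map ((fun p : ℕ × (Fin n → ℤ) => ((p.1 : ℤ) • p.2)) ∘
        fun g => (fl g, g))).sum) = y := by
      rw [show ((fun p : ℕ × (Fin n → ℤ) => ((p.1 : ℤ) • p.2)) ∘ fun g => (fl g, g))
        = fun g => (fl g : ℤ) • g from rfl]
      rw [list_map_sum_toFinset T' (fun g => (fl g : ℤ) • g)]
    have hB : ((Lr.map ((fun p : ℕ × (Fin n → ℤ) => ((p.1 : ℤ) • p.2)) ∘
        fun g => ((1:ℕ), g))).sum) = r := by
      rw [show ((fun p : ℕ × (Fin n → ℤ) => ((p.1 : ℤ) • p.2)) ∘ fun g => ((1:ℕ), g))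
        = fun g => ((1:ℕ) : ℤ) • g from rfl]
      simp only [Nat.cast_one, one_smul]
      rw [List.map_id']
      exact hLrsum
    rw [hA, hB]
    exact hzyr
  · -- the properties
    intro i
    show (pairs.getD (i : ℕ) (0, 0)).2 = 0 ∨
      (InGraverBasis A ((pairs.getD (i : ℕ) (0, 0)).2) ∧
        SignCompat ((pairs.getD (i : ℕ) (0, 0)).2) z)
    by_cases hi : (i : ℕ) < pairs.length
    · have hmem : pairs.getD (i : ℕ) (0, 0) ∈ pairs := by
        rw [List.getD_eq_getElem pairs (0, 0) hi]
        exact List.getElem_mem hi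
      have hsplit : ∀ p ∈ pairs, (∃ g ∈ T', p = (fl g, g)) ∨ (∃ g ∈ Lr, p = ((1:ℕ), g)) := by
        intro p hp
        rw [hpairs] at hp
        rcases List.mem_append.mp hp with h | h
        · obtain ⟨g, hg, heq⟩ := List.mem_map.mp h
          exact Or.inl ⟨g, Finset.mem_toList.mp hg, heq.symm⟩
        · obtain ⟨g, hg, heq⟩ := List.mem_map.mp h
          exact Or.inr ⟨g, hg, heq.symm⟩
      right
      rcases hsplit _ hmem with ⟨g, hgT', heq⟩ | ⟨g, hgLr, heq⟩
      · have hgT : g ∈ T := hsub hgT'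
        have hp := hTprops g hgT
        rw [heq]
        exact ⟨hp.1, signCompat_of_conf hp.2⟩
      · have hp := hLrz g hgLr
        rw [heq]
        exact ⟨hp.1, signCompat_of_conf hp.2⟩
    · left
      rw [List.getD_eq_default _ _ (le_of_not_gt hi)]

end GraverAux

/-- Every cycle `z` of `A ∈ ℤ^{m×n}` is a nonnegative integer combination
`z = Σ_{i=1}^{2n} λᵢ gᵢ`, where each `gᵢ` is either zero or a Graver basis
element of `A` sign-compatible with `z`. -/
theorem cycle_graver_decomposition (m n : ℕ) (A : Matrix (Fin m) (Fin n) ℤ)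
    (z : Fin n → ℤ) (hz : IsCycle A z) :
    ∃ (lam : Fin (2 * n) → ℕ) (g : Fin (2 * n) → Fin n → ℤ),
      z = ∑ i, (lam i : ℤ) • g i ∧
      ∀ i, g i = 0 ∨ (InGraverBasis A (g i) ∧ SignCompat (g i) z) :=
  GraverAux.main m n A z hz
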